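/- Let A be a positive definite Hermitian N×N complex matrix. Then the Gaussian integral ∫_{ℂ^N} exp(−(1/2) z̄ᵀ A z) dm(z), where dm is Lebesgue measure on ℂ^N ≅ ℝ^{2N}, equals (2π)^N / det(A). -/

import Mathlib

open MeasureTheory Real Matrix
open scoped ComplexOrder InnerProductSpace

noncomputable section GaussAux

namespace GaussAux

variable (N : ℕ)

abbrev E (N : ℕ) := EuclideanSpace ℂ (Fin N)

instance : MeasurableSpace (E N) := inferInstance
instance : BorelSpace (E N) := inferInstance

def B (N : ℕ) : OrthonormalBasis ((_ : Fin N) × Fin 2) ℝ (E N) :=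
  Pi.orthonormalBasis fun _ ↦ Complex.orthonormalBasisOneI

lemma uncurry_measurable :
    Measurable (Sigma.uncurry : (∀ _ : Fin N, Fin 2 → ℝ) → ((_ : Fin N) × Fin 2 → ℝ)) :=
  measurable_pi_iff.mpr fun p => (measurable_pi_apply p.2).comp (measurable_pi_apply p.1)

lemma mp_uncurry :
    MeasurePreserving (Sigma.uncurry : (∀ _ : Fin N, Fin 2 → ℝ) → ((_ : Fin N) × Fin 2 → ℝ))
      volume volume := by
  refine ⟨uncurry_measurable N, (Measure.pi_eq fun s hs => ?_).symm⟩
  rw [Measure.map_apply (uncurry_measurable N) (MeasurableSet.univ_pi hs)]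
  have hpre : (Sigma.uncurry ⁻¹' Set.univ.pi s : Set (∀ _ : Fin N, Fin 2 → ℝ))
      = Set.univ.pi fun i => Set.univ.pi fun j => s ⟨i, j⟩ := by
    ext x
    simp [Sigma.uncurry, Set.mem_pi, Sigma.forall]
  rw [hpre, volume_pi, Measure.pi_pi]
  simp_rw [volume_pi, Measure.pi_pi]
  rw [← Finset.univ_sigma_univ, Finset.prod_sigma]

def mCurry : (((_ : Fin N) × Fin 2) → ℝ) ≃ᵐ (Fin N → Fin 2 → ℝ) where
  toEquiv := Equiv.piCurry fun _ _ => ℝ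
  measurable_toFun := measurable_pi_iff.mpr fun i => measurable_pi_iff.mpr fun j =>
    measurable_pi_apply (⟨i, j⟩ : (_ : Fin N) × Fin 2)
  measurable_invFun := uncurry_measurable N

lemma mp_curry : MeasurePreserving (mCurry N) volume volume := by
  have h : MeasurePreserving (mCurry N).symm volume volume := mp_uncurry N
  have := h.symm (mCurry N).symm
  simpa using this

/-- The identity map from the euclidean space to the pi type, as a measurable equiv. -/
def mE : E N ≃ᵐ (Fin N → ℂ) where
  toEquiv := WithLp.equiv 2 (Fin N → ℂ)
  measurable_toFun := WithLp.measurable_ofLp 2 (Fin N → ℂ)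
  measurable_invFun := WithLp.measurable_toLp 2 (Fin N → ℂ)

lemma mp_mE :
    MeasurePreserving (mE N) (volume : Measure (E N)) (volume : Measure (Fin N → ℂ)) := by
  have h1 : MeasurePreserving (⇑(B N).repr) (volume : Measure (E N)) volume :=
    (B N).measurePreserving_repr
  have h2 := EuclideanSpace.volume_preserving_symm_measurableEquiv_toLp ((_ : Fin N) × Fin 2)
  have h3 := mp_curry N
  have h4 : MeasurePreserving
      (fun (x : Fin N → Fin 2 → ℝ) (i : Fin N) => Complex.measurableEquivPi.symm (x i))
      volume volume :=
    volume_preserving_pi fun _ => Complex.volume_preserving_equiv_pi.symm _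
  have hcomp := h4.comp ((h3.comp h2).comp h1)
  convert hcomp using 1
  funext x
  funext i
  simp only [Function.comp_apply, Complex.measurableEquivPi_symm_apply]
  have : (mCurry N) ((MeasurableEquiv.toLp 2 _).symm ((B N).repr x)) i
      = fun j => Complex.orthonormalBasisOneI.repr (x i) j := funext fun j => rfl
  rw [this]
  simp [Complex.orthonormalBasisOneI_repr_apply]
  rfl

variable {N}
variable (U : Matrix.unitaryGroup (Fin N) ℂ)

def uLinEquiv : E N ≃ₗ[ℂ] E N :=
  LinearEquiv.ofLinear (Matrix.toEuclideanLin (U : Matrix (Fin N) (Fin N) ℂ))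
    (Matrix.toEuclideanLin (star (U : Matrix (Fin N) (Fin N) ℂ)))
    (by
      ext x
      simp only [LinearMap.comp_apply, Matrix.toEuclideanLin_apply, Equiv.apply_symm_apply,
        Matrix.mulVec_mulVec, LinearMap.id_apply]
      rw [Unitary.mul_star_self_of_mem U.2]
      simp)
    (by
      ext x
      simp only [LinearMap.comp_apply, Matrix.toEuclideanLin_apply, Equiv.apply_symm_apply,
        Matrix.mulVec_mulVec, LinearMap.id_apply]
      rw [Unitary.star_mul_self_of_mem U.2]
      simp)

lemma uLinEquiv_apply (x : E N) :
    uLinEquiv U x = (WithLp.equiv 2 (Fin N → ℂ)).symm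
      ((U : Matrix (Fin N) (Fin N) ℂ) *ᵥ (WithLp.equiv 2 (Fin N → ℂ)) x) := rfl

lemma uLinEquiv_inner (x y : E N) :
    ⟪uLinEquiv U x, uLinEquiv U y⟫_ℂ = ⟪x, y⟫_ℂ := by
  rw [EuclideanSpace.inner_eq_star_dotProduct, EuclideanSpace.inner_eq_star_dotProduct]
  simp only [uLinEquiv_apply, Equiv.apply_symm_apply]
  show ((U : Matrix (Fin N) (Fin N) ℂ) *ᵥ y.ofLp) ⬝ᵥ star ((U : Matrix (Fin N) (Fin N) ℂ) *ᵥ x.ofLp)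
    = y.ofLp ⬝ᵥ star x.ofLp
  rw [Matrix.star_mulVec, dotProduct_comm, ← Matrix.dotProduct_mulVec, Matrix.mulVec_mulVec,
    ← Matrix.star_eq_conjTranspose, Unitary.star_mul_self_of_mem U.2, Matrix.one_mulVec,
    dotProduct_comm]

def uIso : E N ≃ₗᵢ[ℂ] E N :=
  (uLinEquiv U).isometryOfInner (uLinEquiv_inner U)

def uIsoR : E N ≃ₗᵢ[ℝ] E N :=
  ⟨(uLinEquiv U).restrictScalars ℝ, fun x => (uIso U).norm_map x⟩

/-- Multiplication by a unitary matrix as a measurable equivalence of `Fin N → ℂ`. -/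
def SEquiv : (Fin N → ℂ) ≃ᵐ (Fin N → ℂ) :=
  ((mE N).symm.trans (uIsoR U).toHomeomorph.toMeasurableEquiv).trans (mE N)

lemma SEquiv_apply (w : Fin N → ℂ) :
    SEquiv U w = (U : Matrix (Fin N) (Fin N) ℂ) *ᵥ w := rfl

lemma mp_SEquiv : MeasurePreserving (SEquiv U) volume volume := by
  have h1 : MeasurePreserving (⇑(mE N).symm) (volume : Measure (Fin N → ℂ)) volume :=
    (mp_mE N).symm (mE N)
  have h2 : MeasurePreserving (⇑(uIsoR U)) (volume : Measure (E N)) volume :=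
    (uIsoR U).measurePreserving
  exact (mp_mE N).comp (h2.comp h1)

end GaussAux

end GaussAux

noncomputable section

open GaussAux Complex

lemma integral_cgauss {b : ℝ} (hb : 0 < b) :
    (∫ z : ℂ, Real.exp (-b * Complex.normSq z)) = π / b := by
  have h : MeasurePreserving (Complex.measurableEquivRealProd.symm) volume volume :=
    Complex.volume_preserving_equiv_real_prod.symm Complex.measurableEquivRealProd
  rw [← h.integral_comp (MeasurableEquiv.measurableEmbedding _)
    (fun z => Real.exp (-b * Complex.normSq z))]
  have : ∀ p : ℝ × ℝ,
      Real.exp (-b * Complex.normSq (Complex.measurableEquivRealProd.symm p))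
        = Real.exp (-b * p.1 ^ 2) * Real.exp (-b * p.2 ^ 2) := by
    intro p
    rw [← Real.exp_add]
    congr 1
    simp [Complex.normSq_mk]
    ring
  simp_rw [this]
  rw [Measure.volume_eq_prod,
    integral_prod_mul (fun x : ℝ => rexp (-b * x ^ 2)) (fun x : ℝ => rexp (-b * x ^ 2)),
    integral_gaussian b]
  exact Real.mul_self_sqrt (by positivity)

end

/-- Gaussian integral with a positive definite Hermitian matrix A:
∫_{ℂ^N} exp(-(1/2) z̄ᵀ A z) dm(z) = (2π)^N / det A. -/
theorem gaussian_integral_posdef (N : ℕ) (A : Matrix (Fin N) (Fin N) ℂ)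
    (hA : A.PosDef) :
    ((∫ z : Fin N → ℂ,
        Real.exp (-(1 / 2) * (star z ⬝ᵥ A.mulVec z).re) : ℝ) : ℂ)
      = (2 * (π : ℂ)) ^ N / A.det := by
  classical
  have hH : A.IsHermitian := hA.1
  set U : Matrix.unitaryGroup (Fin N) ℂ := hH.eigenvectorUnitary with hUdef
  set lam : Fin N → ℝ := hH.eigenvalues with hlamdef
  have hlam : ∀ i, 0 < lam i := fun i => hA.eigenvalues_pos i
  -- change of variables z = U w
  have hcov := ((GaussAux.mp_SEquiv U).integral_comp (GaussAux.SEquiv U).measurableEmbedding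
    (fun z : Fin N → ℂ => Real.exp (-(1 / 2) * (star z ⬝ᵥ A.mulVec z).re))).symm
  rw [hcov]
  -- rewrite the quadratic form
  have hdiag : star (U : Matrix (Fin N) (Fin N) ℂ) * A * (U : Matrix (Fin N) (Fin N) ℂ)
      = Matrix.diagonal (fun i => (lam i : ℂ)) := by
    have := hH.conjStarAlgAut_star_eigenvectorUnitary
    rw [Unitary.conjStarAlgAut_apply] at this
    simp only [Unitary.coe_star, star_star] at this
    rw [hUdef, this]
    rfl
  have hquad : ∀ w : Fin N → ℂ,
      (star (GaussAux.SEquiv U w) ⬝ᵥ A.mulVec (GaussAux.SEquiv U w)).re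
        = ∑ i, lam i * Complex.normSq (w i) := by
    intro w
    rw [GaussAux.SEquiv_apply]
    have h1 : star ((U : Matrix (Fin N) (Fin N) ℂ) *ᵥ w)
        ⬝ᵥ A.mulVec ((U : Matrix (Fin N) (Fin N) ℂ) *ᵥ w)
        = star w ⬝ᵥ (Matrix.diagonal (fun i => (lam i : ℂ))) *ᵥ w := by
      rw [Matrix.star_mulVec, Matrix.mulVec_mulVec, Matrix.dotProduct_mulVec,
        Matrix.vecMul_vecMul, ← Matrix.star_eq_conjTranspose, ← mul_assoc, hdiag,
        ← Matrix.dotProduct_mulVec]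
    rw [h1]
    have h2 : star w ⬝ᵥ (Matrix.diagonal (fun i => (lam i : ℂ))) *ᵥ w
        = ∑ i, (lam i : ℂ) * ((starRingEnd ℂ) (w i) * w i) := by
      simp only [dotProduct, Matrix.mulVec_diagonal, Pi.star_apply, RCLike.star_def]
      exact Finset.sum_congr rfl fun i _ => by ring
    rw [h2, Complex.re_sum]
    refine Finset.sum_congr rfl fun i _ => ?_
    rw [← Complex.normSq_eq_conj_mul_self, ← Complex.ofReal_mul, Complex.ofReal_re]
  have hfactor : ∀ w : Fin N → ℂ,
      Real.exp (-(1 / 2) * ∑ i, lam i * Complex.normSq (w i))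
        = ∏ i, Real.exp (-(lam i / 2) * Complex.normSq (w i)) := by
    intro w
    rw [← Real.exp_sum]
    congr 1
    rw [Finset.mul_sum]
    exact Finset.sum_congr rfl fun i _ => by ring
  simp_rw [hquad, hfactor]
  rw [MeasureTheory.integral_fintype_prod_volume_eq_prod (ι := Fin N)
    (fun i (z : ℂ) => Real.exp (-(lam i / 2) * Complex.normSq z))]
  have hone : ∀ i, (∫ z : ℂ, Real.exp (-(lam i / 2) * Complex.normSq z)) = 2 * π / lam i := by
    intro i
    rw [integral_cgauss (by have := hlam i; positivity)]
    rw [div_div_eq_mul_div]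
    ring
  simp_rw [hone]
  rw [Complex.ofReal_prod]
  have hcast : ∀ i, ((2 * π / lam i : ℝ) : ℂ) = (2 * (π : ℂ)) / (lam i : ℂ) := by
    intro i; push_cast; ring
  simp_rw [hcast]
  rw [Finset.prod_div_distrib, Finset.prod_const, Finset.card_univ, Fintype.card_fin,
    hH.det_eq_prod_eigenvalues]
  rfl
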